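/- Let A be a C*-algebra, T a densely defined A-linear operator on A (viewed as a Hilbert module over itself) with densely defined adjoint, and π an irreducible representation of A. Then the fiber operator T_π, defined on D(T)_π = π(D(T)) by T_π π(a) = π(Ta), is well defined: if π(a) = π(b) for a,b ∈ D(T), then π(Ta) = π(Tb). -/
import Mathlib

open scoped CStarAlgebra

/-- Let `A` be a C*-algebra, `T` a densely defined `A`-linear operator on `A`
(Hilbert module over itself, `⟪a,b⟫ = a* b`) with densely defined adjoint `S`, and `π` an
irreducible representation of `A` on a Hilbert space `Hπ`.  Then the fiber operator `T_π`,
`T_π (π a) := π (T a)`, is well defined: `π a = π b` implies `π (T a) = π (T b)`. -/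
theorem stmt_8 {A : Type*} [NonUnitalCStarAlgebra A]
    {Hπ : Type*} [NormedAddCommGroup Hπ] [InnerProductSpace ℂ Hπ] [CompleteSpace Hπ]
    (D : Submodule ℂ A) (hD : Dense (D : Set A))
    (hIdeal : ∀ a ∈ D, ∀ x : A, a * x ∈ D)
    (Ds : Submodule ℂ A) (hDs : Dense (Ds : Set A))
    (T : D →ₗ[ℂ] A) (S : Ds →ₗ[ℂ] A)
    (hTmod : ∀ (a : D) (x : A), T ⟨(a : A) * x, hIdeal a a.2 x⟩ = T a * x)
    (hadj : ∀ (a : D) (c : Ds), star (T a) * (c : A) = star (a : A) * S c)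
    (π : A →⋆ₙₐ[ℂ] (Hπ →L[ℂ] Hπ))
    (hirr : ∀ ξ : Hπ, ξ ≠ 0 → Dense (Set.range fun a : A => π a ξ)) :
    ∀ a b : D, π a = π b → π (T a) = π (T b) := by
  intro a b hab
  set d : D := a - b with hd
  have hπd : π (d : A) = 0 := by
    simp [hd, Submodule.coe_sub, map_sub, hab]
  -- Key step 1: star (π (T d)) * π c = 0 for c ∈ Ds
  have key1 : ∀ c : Ds, star (π (T d)) * π (c : A) = 0 := by
    intro c
    calc star (π (T d)) * π (c : A) = π (star (T d) * (c : A)) := by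
          rw [map_mul, map_star]
      _ = π (star (d : A) * S c) := by rw [hadj]
      _ = star (π (d : A)) * π (S c) := by rw [map_mul, map_star]
      _ = 0 := by rw [hπd, star_zero, zero_mul]
  -- Continuity of π
  have hπcont : Continuous π := map_continuous π
  -- Key step 2: extend to all of A by density
  have key2 : ∀ x : A, star (π (T d)) * π x = 0 := by
    have hcont : Continuous fun x : A => star (π (T d)) * π x :=
      continuous_const.mul hπcont
    intro x
    have : Set.EqOn (fun x : A => star (π (T d)) * π x) (fun _ => 0) (Ds : Set A) :=
      fun y hy => key1 ⟨y, hy⟩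
    exact congrFun (Continuous.ext_on hDs hcont continuous_const this) x
  -- Key step 3: star (π (T d)) = 0
  have key3 : star (π (T d)) = 0 := by
    ext ξ
    by_cases hξ : ξ = 0
    · simp [hξ]
    · have hdense := hirr ξ hξ
      have hz : ∀ η ∈ Set.range fun a : A => π a ξ, star (π (T d)) η = 0 := by
        rintro η ⟨x, rfl⟩
        have := congrArg (fun f : Hπ →L[ℂ] Hπ => f ξ) (key2 x)
        simpa using this
      have : Set.EqOn (⇑(star (π (T d)))) (fun _ => 0)
          (Set.range fun a : A => π a ξ) := fun η hη => hz η hη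
      have := Continuous.ext_on hdense (star (π (T d))).continuous continuous_const this
      simpa using congrFun this ξ
  have hπTd : π (T d) = 0 := by
    have := congrArg star key3
    simpa using this
  have hTd : T d = T a - T b := by rw [hd, map_sub]
  have : π (T a) - π (T b) = 0 := by
    rw [← map_sub, ← hTd, hπTd]
  exact sub_eq_zero.mp this
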